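/- Let A ⊆ ℝ^n be a nonempty compact set, let F : ℝ^p × ℝ^n → ℝ^m be jointly continuous, and let f : ℝ^p × ℝ^n → ℝ be jointly continuous. Assume that for every α ∈ A the problem min_{ω ∈ ℝ^p} f(ω, α) has a unique global minimizer ω*(α), and that the set {ω*(α) : α ∈ A} is bounded. Then the vector-valued function α ↦ F(ω*(α), α) is continuous on A. -/

import Mathlib

open Filter Topology

noncomputable section

/-- The set of minimal points of a set `C ⊆ ℝ^m` w.r.t. the componentwise order
(the partial order induced by the cone `P = ℝ^m₊`). -/
def minPts {m : ℕ} (C : Set (EuclideanSpace ℝ (Fin m))) : Set (EuclideanSpace ℝ (Fin m)) :=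
  {l ∈ C | ¬ ∃ l' ∈ C, l' ≠ l ∧ ∀ i, l' i ≤ l i}

/-- The set of minimal points of the image `g(Z)`. -/
def minOf {n m : ℕ} (Z : Set (EuclideanSpace ℝ (Fin n)))
    (g : EuclideanSpace ℝ (Fin n) → EuclideanSpace ℝ (Fin m)) :
    Set (EuclideanSpace ℝ (Fin m)) :=
  minPts (g '' Z)

/-- The efficient (Pareto-optimal) solution set of `g` on `Z`. -/
def effOf {n m : ℕ} (Z : Set (EuclideanSpace ℝ (Fin n)))
    (g : EuclideanSpace ℝ (Fin n) → EuclideanSpace ℝ (Fin m)) :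
    Set (EuclideanSpace ℝ (Fin n)) :=
  {z ∈ Z | g z ∈ minOf Z g}

/-- The weakly efficient solution set: `z* ∈ Z` such that there is no `z ∈ Z` with
`gᵢ(z) < gᵢ(z*)` for every `i`. -/
def wEffOf {n m : ℕ} (Z : Set (EuclideanSpace ℝ (Fin n)))
    (g : EuclideanSpace ℝ (Fin n) → EuclideanSpace ℝ (Fin m)) :
    Set (EuclideanSpace ℝ (Fin n)) :=
  {z ∈ Z | ¬ ∃ z' ∈ Z, ∀ i, g z' i < g z i}

/-- The set of weakly minimal points of the image `g(Z)`. -/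
def wMinOf {n m : ℕ} (Z : Set (EuclideanSpace ℝ (Fin n)))
    (g : EuclideanSpace ℝ (Fin n) → EuclideanSpace ℝ (Fin m)) :
    Set (EuclideanSpace ℝ (Fin m)) :=
  g '' wEffOf Z g

/-- `g : Z → ℝ^m` is P-convex iff each component is convex on `Z`. -/
def PConvexOn {n m : ℕ} (Z : Set (EuclideanSpace ℝ (Fin n)))
    (g : EuclideanSpace ℝ (Fin n) → EuclideanSpace ℝ (Fin m)) : Prop :=
  ∀ i, ConvexOn ℝ Z (fun z => g z i)

/-- `g : Z → ℝ^m` is strictly P-convex iff every component satisfies the strict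
convexity inequality for distinct points and λ ∈ (0,1). -/
def StrictPConvexOn {n m : ℕ} (Z : Set (EuclideanSpace ℝ (Fin n)))
    (g : EuclideanSpace ℝ (Fin n) → EuclideanSpace ℝ (Fin m)) : Prop :=
  ∀ z₁ ∈ Z, ∀ z₂ ∈ Z, z₁ ≠ z₂ → ∀ lam : ℝ, 0 < lam → lam < 1 → ∀ i,
    g (lam • z₁ + (1 - lam) • z₂) i < lam * g z₁ i + (1 - lam) * g z₂ i

/-- The recession cone `0⁺(A) = {d : a + t • d ∈ A, ∀ a ∈ A, ∀ t ≥ 0}`. -/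
def recCone {n : ℕ} (A : Set (EuclideanSpace ℝ (Fin n))) : Set (EuclideanSpace ℝ (Fin n)) :=
  {d | ∀ a ∈ A, ∀ t : ℝ, 0 ≤ t → a + t • d ∈ A}

/-- The Kuratowski lower limit of a sequence of sets. -/
def KLi {X : Type*} [TopologicalSpace X] (A : ℕ → Set X) : Set X :=
  {a | ∃ s : ℕ → X, (∀ᶠ k in atTop, s k ∈ A k) ∧ Tendsto s atTop (𝓝 a)}

/-- The Kuratowski upper limit of a sequence of sets. -/
def KLs {X : Type*} [TopologicalSpace X] (A : ℕ → Set X) : Set X :=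
  {a | ∃ φ : ℕ → ℕ, StrictMono φ ∧ ∃ s : ℕ → X,
    (∀ k, s k ∈ A (φ k)) ∧ Tendsto s atTop (𝓝 a)}

/-- The sequence of functions `g` converges continuously on `Z` to `g0`. -/
def ContConvOn {X Y : Type*} [TopologicalSpace X] [TopologicalSpace Y]
    (Z : Set X) (g : ℕ → X → Y) (g0 : X → Y) : Prop :=
  ∀ z ∈ Z, ∀ s : ℕ → X, (∀ k, s k ∈ Z) → Tendsto s atTop (𝓝 z) →
    Tendsto (fun k => g k (s k)) atTop (𝓝 (g0 z))

/-- If `A ⊆ ℝ^n` is nonempty and compact, `F : ℝ^p × ℝ^n → ℝ^m` and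
`f : ℝ^p × ℝ^n → ℝ` are jointly continuous, for every `α ∈ A` the function `f(·, α)`
has a unique global minimizer `ωstar α`, and `{ωstar α : α ∈ A}` is bounded, then
`α ↦ F(ωstar α, α)` is continuous on `A`. -/
theorem stmt_0 {n p m : ℕ}
    (A : Set (EuclideanSpace ℝ (Fin n))) (hAne : A.Nonempty) (hAcp : IsCompact A)
    (F : EuclideanSpace ℝ (Fin p) × EuclideanSpace ℝ (Fin n) → EuclideanSpace ℝ (Fin m))
    (hF : Continuous F)
    (f : EuclideanSpace ℝ (Fin p) × EuclideanSpace ℝ (Fin n) → ℝ)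
    (hf : Continuous f)
    (ωstar : EuclideanSpace ℝ (Fin n) → EuclideanSpace ℝ (Fin p))
    (hmin : ∀ α ∈ A, ∀ ω, f (ωstar α, α) ≤ f (ω, α))
    (huniq : ∀ α ∈ A, ∀ ω, f (ω, α) = f (ωstar α, α) → ω = ωstar α)
    (hbdd : Bornology.IsBounded (ωstar '' A)) :
    ContinuousOn (fun α => F (ωstar α, α)) A := by
  classical
  -- compact set containing all ωstar α, α ∈ A
  set K := closure (ωstar '' A) with hK
  have hKcp : IsCompact K := Metric.isCompact_of_isClosed_isBounded isClosed_closure hbdd.closure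
  -- continuity of ωstar on A
  have hωcont : ContinuousOn ωstar A := by
    intro α hα
    rw [ContinuousWithinAt, tendsto_iff_seq_tendsto]
    intro x hx
    have hxA : ∀ᶠ k in atTop, x k ∈ A := hx (self_mem_nhdsWithin)
    have hxα : Tendsto x atTop (𝓝 α) := hx.mono_right nhdsWithin_le_nhds
    -- replace x by a sequence entirely in A
    set y : ℕ → EuclideanSpace ℝ (Fin n) := fun k => if x k ∈ A then x k else α with hy
    have hyA : ∀ k, y k ∈ A := by
      intro k; by_cases h : x k ∈ A <;> simp [hy, h, hα]
    have hyeq : ∀ᶠ k in atTop, ωstar (x k) = ωstar (y k) := by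
      filter_upwards [hxA] with k hk; simp [hy, hk]
    have hyα : Tendsto y atTop (𝓝 α) := by
      refine hxα.congr' ?_
      filter_upwards [hxA] with k hk; simp [hy, hk]
    show Tendsto (fun k => ωstar (x k)) atTop (𝓝 (ωstar α))
    rw [tendsto_congr' hyeq]
    -- main argument
    apply tendsto_of_subseq_tendsto
    intro ns hns
    have hmem : ∀ k, ωstar (y (ns k)) ∈ K :=
      fun k => subset_closure (Set.mem_image_of_mem _ (hyA (ns k)))
    obtain ⟨ω, hωK, φ, hφ, hφt⟩ := hKcp.tendsto_subseq hmem
    have hyφ : Tendsto (fun k => y (ns (φ k))) atTop (𝓝 α) :=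
      hyα.comp (hns.comp hφ.tendsto_atTop)
    have hpair : Tendsto (fun k => (ωstar (y (ns (φ k))), y (ns (φ k)))) atTop (𝓝 (ω, α)) :=
      hφt.prodMk_nhds hyφ
    have hle : ∀ ω', f (ω, α) ≤ f (ω', α) := by
      intro ω'
      have h1 : Tendsto (fun k => f (ωstar (y (ns (φ k))), y (ns (φ k)))) atTop (𝓝 (f (ω, α))) :=
        (hf.tendsto _).comp hpair
      have h2 : Tendsto (fun k => f (ω', y (ns (φ k)))) atTop (𝓝 (f (ω', α))) :=
        (hf.tendsto _).comp (tendsto_const_nhds.prodMk_nhds hyφ)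
      exact le_of_tendsto_of_tendsto' h1 h2 fun k => hmin _ (hyA _) ω'
    have hωeq : ω = ωstar α :=
      huniq α hα ω (le_antisymm (hle (ωstar α)) (hmin α hα ω))
    exact ⟨φ, hωeq ▸ hφt⟩
  exact hF.comp_continuousOn (hωcont.prodMk continuousOn_id)
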